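/- For every α ∈ ℂ, the module V(α) = ℂ^N[t,t⁻¹]t^α is an irreducible 𝒟̂^N-module of the intermediate series: every graded component V(α)_j is one-dimensional, and V(α) has no proper nonzero 𝒟̂^N-submodule. -/

import Mathlib

noncomputable section

open scoped BigOperators

/-- Falling factorial `[b]_s = b(b-1)⋯(b-s+1)` of an integer `b`. -/
def dfall (b : ℤ) (s : ℕ) : ℤ := ∏ i ∈ Finset.range s, (b - (i : ℤ))

/-- Generalized binomial coefficient `binom(a, n)` as a complex number, for `a : ℤ`, `n : ℕ`. -/
def cbinom (a : ℤ) (n : ℕ) : ℂ :=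
  (∏ i ∈ Finset.range n, ((a : ℂ) - (i : ℂ))) / (n.factorial : ℂ)

/-- The coefficient `δ_{i,-k} (-1)^j j! l! binom(i+j, j+l+1)` of the central element in the
bracket of `t^a (d/dt)^j A = t^i [D]_j A` (with `a = i + j`) and `t^b (d/dt)^l B = t^k [D]_l B`
(with `b = k + l`); it is still to be multiplied by `tr (AB)`. -/
def cocycleCoeff (a : ℤ) (j : ℕ) (b : ℤ) (l : ℕ) : ℂ :=
  if a + b = (j : ℤ) + (l : ℤ) then
    (-1 : ℂ) ^ j * (j.factorial : ℂ) * (l.factorial : ℂ) * cbinom a (j + l + 1)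
  else 0

/-- A module over the universal central extension `𝒟̂^N` of the Lie algebra of `N × N`-matrix
differential operators on the circle, presented through the action `ρ a j A` of the basis
elements `t^a (d/dt)^j A = t^{a-j} [D]_j A` (`a ∈ ℤ`, `j ∈ ℕ`, `A ∈ gl_N(ℂ)`) together with the
action `cC` of the central element `C`, subject to bilinearity in `A` and the commutation
relations (2.3)/(3.12) of the paper. -/
structure DhatModule (N : ℕ) (V : Type*) [AddCommGroup V] [Module ℂ V] where
  ρ : ℤ → ℕ → Matrix (Fin N) (Fin N) ℂ → Module.End ℂ V
  cC : Module.End ℂ V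
  ρ_add : ∀ a j A B, ρ a j (A + B) = ρ a j A + ρ a j B
  ρ_smul : ∀ a j (c : ℂ) A, ρ a j (c • A) = c • ρ a j A
  cC_comm : ∀ a j A, cC * ρ a j A = ρ a j A * cC
  bracket_rel : ∀ (a : ℤ) (j : ℕ) (A : Matrix (Fin N) (Fin N) ℂ) (b : ℤ) (l : ℕ)
      (B : Matrix (Fin N) (Fin N) ℂ),
    ρ a j A * ρ b l B - ρ b l B * ρ a j A =
      ((∑ s ∈ Finset.range (j + 1),
        ((j.choose s : ℂ) * (dfall b s : ℂ)) • ρ (a + b - (s : ℤ)) (j + l - s) (A * B))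
      - (∑ s ∈ Finset.range (l + 1),
        ((l.choose s : ℂ) * (dfall a s : ℂ)) • ρ (a + b - (s : ℤ)) (j + l - s) (B * A)))
      + (cocycleCoeff a j b l * (A * B).trace) • cC

namespace DhatModule

variable {N : ℕ} {V : Type*} [AddCommGroup V] [Module ℂ V]

/-- A subspace invariant under the `𝒟̂^N`-action. -/
def IsSub (M : DhatModule N V) (U : Submodule ℂ V) : Prop :=
  (∀ a j A, ∀ v ∈ U, M.ρ a j A v ∈ U) ∧ ∀ v ∈ U, M.cC v ∈ U

/-- The module is trivial: `𝒟̂^N` acts by zero. -/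
def IsTrivial (M : DhatModule N V) : Prop :=
  (∀ a j A (v : V), M.ρ a j A v = 0) ∧ ∀ v : V, M.cC v = 0

/-- Irreducibility: the module is nonzero and has no invariant subspace besides `⊥` and `⊤`. -/
def IsIrreducible (M : DhatModule N V) : Prop :=
  (⊥ : Submodule ℂ V) ≠ ⊤ ∧ ∀ U : Submodule ℂ V, M.IsSub U → U = ⊥ ∨ U = ⊤

/-- Indecomposability: the module is nonzero and is not the direct sum of two nonzero
invariant subspaces. -/
def IsIndecomposable (M : DhatModule N V) : Prop :=
  (⊥ : Submodule ℂ V) ≠ ⊤ ∧ ∀ U W : Submodule ℂ V, M.IsSub U → M.IsSub W →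
    U ⊓ W = ⊥ → U ⊔ W = ⊤ → U = ⊥ ∨ W = ⊥

end DhatModule

/-- The degree of the basis element `t^a (d/dt)^j E_{p,q} = t^{a-j} [D]_j E_{p,q}` in the
principal `ℤ`-gradation of `𝒟̂^N`, namely `(a - j) N + p - q` (here `p, q ∈ Fin N` correspond
to `p+1, q+1 ∈ [1,N]`). -/
def gdeg (N : ℕ) (a : ℤ) (j : ℕ) (p q : Fin N) : ℤ :=
  (a - (j : ℤ)) * (N : ℤ) + (p.val : ℤ) - (q.val : ℤ)

/-- A `ℤ`-graded `𝒟̂^N`-module, graded compatibly with the principal gradation of `𝒟̂^N`. -/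
structure GradedDhatModule (N : ℕ) (V : Type*) [AddCommGroup V] [Module ℂ V]
    extends DhatModule N V where
  grade : ℤ → Submodule ℂ V
  isInternal : DirectSum.IsInternal grade
  grade_ρ : ∀ (a : ℤ) (j : ℕ) (p q : Fin N) (d : ℤ), ∀ v ∈ grade d,
    ρ a j (Matrix.single p q 1) v ∈ grade (d + gdeg N a j p q)
  grade_cC : ∀ (d : ℤ), ∀ v ∈ grade d, cC v ∈ grade d

namespace GradedDhatModule

variable {N : ℕ} {V : Type*} [AddCommGroup V] [Module ℂ V]

/-- Quasifiniteness: every graded component is finite-dimensional. -/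
def IsQuasifinite (G : GradedDhatModule N V) : Prop :=
  ∀ d : ℤ, FiniteDimensional ℂ (G.grade d)

/-- Uniformly bounded: the dimensions of the graded components are uniformly bounded. -/
def IsUniformlyBounded (G : GradedDhatModule N V) : Prop :=
  ∃ K : ℕ, ∀ d : ℤ, Module.rank ℂ (G.grade d) ≤ (K : Cardinal)

/-- Module of the intermediate series: all graded components have dimension at most `1`. -/
def IsIntermediateSeries (G : GradedDhatModule N V) : Prop :=
  ∀ d : ℤ, Module.rank ℂ (G.grade d) ≤ 1

/-- A highest weight vector: homogeneous, nonzero, with `(𝒟̂^N)₀ v ⊆ ℂ v` and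
`(𝒟̂^N)₊ v = 0`. -/
def IsHWVector (G : GradedDhatModule N V) (v : V) : Prop :=
  v ≠ 0 ∧ (∃ d : ℤ, v ∈ G.grade d) ∧
  (∀ (a : ℤ) (j : ℕ) (p q : Fin N), gdeg N a j p q = 0 →
    ∃ c : ℂ, G.ρ a j (Matrix.single p q 1) v = c • v) ∧
  (∃ c : ℂ, G.cC v = c • v) ∧
  (∀ (a : ℤ) (j : ℕ) (p q : Fin N), 0 < gdeg N a j p q →
    G.ρ a j (Matrix.single p q 1) v = 0)

/-- A lowest weight vector: homogeneous, nonzero, with `(𝒟̂^N)₀ v ⊆ ℂ v` and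
`(𝒟̂^N)₋ v = 0`. -/
def IsLWVector (G : GradedDhatModule N V) (v : V) : Prop :=
  v ≠ 0 ∧ (∃ d : ℤ, v ∈ G.grade d) ∧
  (∀ (a : ℤ) (j : ℕ) (p q : Fin N), gdeg N a j p q = 0 →
    ∃ c : ℂ, G.ρ a j (Matrix.single p q 1) v = c • v) ∧
  (∃ c : ℂ, G.cC v = c • v) ∧
  (∀ (a : ℤ) (j : ℕ) (p q : Fin N), gdeg N a j p q < 0 →
    G.ρ a j (Matrix.single p q 1) v = 0)

/-- A highest weight module: generated by a highest weight vector. -/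
def IsHWModule (G : GradedDhatModule N V) : Prop :=
  ∃ v : V, G.IsHWVector v ∧
    ∀ U : Submodule ℂ V, G.toDhatModule.IsSub U → v ∈ U → U = ⊤

/-- A lowest weight module: generated by a lowest weight vector. -/
def IsLWModule (G : GradedDhatModule N V) : Prop :=
  ∃ v : V, G.IsLWVector v ∧
    ∀ U : Submodule ℂ V, G.toDhatModule.IsSub U → v ∈ U → U = ⊤

end GradedDhatModule

/-- Falling factorial `[x]_j = x(x-1)⋯(x-j+1)` in `ℂ`. -/
def cfall (x : ℂ) (j : ℕ) : ℂ := ∏ s ∈ Finset.range j, (x - (s : ℂ))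

/-- The underlying space `ℂ^N[t,t⁻¹] t^α` of the modules `V(α)` and `V̄(α)`; the coefficient
of `t^{k+α}` is stored at index `k`. -/
abbrev LTP (N : ℕ) : Type := ℤ →₀ (Fin N → ℂ)

/-- The action of `t^a (d/dt)^j A = t^{a-j} [D]_j A` on `V(α)`:
`t^{a-j} [D]_j A ⬝ (t^{k+α} v) = [k+α]_j t^{k+a-j+α} (A v)`. -/
def VAct (N : ℕ) (α : ℂ) (a : ℤ) (j : ℕ) (A : Matrix (Fin N) (Fin N) ℂ) :
    Module.End ℂ (LTP N) :=
  Finsupp.lsum ℂ fun k : ℤ =>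
    (Finsupp.lsingle (k + a - (j : ℤ))) ∘ₗ (cfall ((k : ℂ) + α) j • A.mulVecLin)

/-- The action of `t^a (d/dt)^j A = t^{a-j} [D]_j A` on the twisted module `V̄(α)`:
`t^i f(D) A ⬝ (t^{k+α} v) = -f(-(i+k+α)) t^{i+k+α} (Aᵀ v)` for `f(D) = [D]_j`. -/
def VbarAct (N : ℕ) (α : ℂ) (a : ℤ) (j : ℕ) (A : Matrix (Fin N) (Fin N) ℂ) :
    Module.End ℂ (LTP N) :=
  Finsupp.lsum ℂ fun k : ℤ =>
    (Finsupp.lsingle (k + a - (j : ℤ))) ∘ₗ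
      ((-(cfall (-(((k + a - (j : ℤ)) : ℂ) + α)) j)) • (A.transpose).mulVecLin)

/-- The graded component `V(α)_d = ℂ t^{k+α} ε_r`, where `d + 1 = kN + r` with `r ∈ [1,N]`
(equivalently `d = kN + r'` with `r' = r - 1 ∈ Fin N`). -/
def VGrade (N : ℕ) (d : ℤ) : Submodule ℂ (LTP N) :=
  Submodule.span ℂ {x : LTP N | ∃ (k : ℤ) (r : Fin N) (c : ℂ),
    d = k * (N : ℤ) + (r.val : ℤ) ∧ x = Finsupp.single k (Pi.single r c)}



lemma cfall_zero (x : ℂ) : cfall x 0 = 1 := by simp [cfall]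

lemma cfall_one (x : ℂ) : cfall x 1 = x := by simp [cfall]

lemma cfall_succ (x : ℂ) (j : ℕ) : cfall x (j+1) = cfall x j * (x - j) := by
  simp [cfall, Finset.prod_range_succ]

lemma cfall_add (x : ℂ) (m n : ℕ) : cfall x (m + n) = cfall x m * cfall (x - m) n := by
  induction n with
  | zero => simp [cfall_zero]
  | succ n ih =>
    rw [← Nat.add_assoc, cfall_succ, ih, cfall_succ]
    push_cast
    ring

lemma dfall_cast (b : ℤ) (s : ℕ) : ((dfall b s : ℤ) : ℂ) = cfall (b : ℂ) s := by
  simp [dfall, cfall]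

lemma cfall_vandermonde (y c : ℂ) (j : ℕ) :
    cfall (y + c) j
      = ∑ s ∈ Finset.range (j+1), (j.choose s : ℂ) * cfall c s * cfall y (j - s) := by
  induction j with
  | zero => simp [cfall_zero]
  | succ j ih =>
    rw [cfall_succ, ih, Finset.sum_mul]
    rw [Finset.sum_range_succ' (fun s => ((j+1).choose s : ℂ) * cfall c s * cfall y (j + 1 - s))]
    have e1 : ∀ s ∈ Finset.range (j+1),
        (j.choose s : ℂ) * cfall c s * cfall y (j - s) * (y + c - j)
          = (j.choose s : ℂ) * cfall c (s+1) * cfall y (j - s)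
            + (j.choose s : ℂ) * cfall c s * cfall y (j + 1 - s) := by
      intro s hs
      rw [Finset.mem_range] at hs
      have h1 : cfall c (s+1) = cfall c s * (c - s) := cfall_succ c s
      have h2 : j + 1 - s = (j - s) + 1 := by omega
      rw [h1, h2, cfall_succ]
      have h3 : ((j - s : ℕ) : ℂ) = (j : ℂ) - (s : ℂ) := by
        have : ((j - s : ℕ) : ℤ) = (j : ℤ) - s := by omega
        exact_mod_cast congrArg (Int.cast : ℤ → ℂ) this
      rw [h3]; ring
    rw [Finset.sum_congr rfl e1, Finset.sum_add_distrib]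
    have e2 : ∀ s ∈ Finset.range (j+1),
        ((j+1).choose (s+1) : ℂ) * cfall c (s+1) * cfall y (j + 1 - (s+1))
          = (j.choose s : ℂ) * cfall c (s+1) * cfall y (j - s)
            + (j.choose (s+1) : ℂ) * cfall c (s+1) * cfall y (j - s) := by
      intro s hs
      have : ((j+1).choose (s+1) : ℂ) = (j.choose s : ℂ) + (j.choose (s+1) : ℂ) := by
        rw [Nat.choose_succ_succ]; push_cast; ring
      have h2 : j + 1 - (s+1) = j - s := by omega
      rw [this, h2]; ring
    rw [Finset.sum_congr rfl e2, Finset.sum_add_distrib]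
    -- now: ∑ C(j,s) c^{(s+1)} y^{(j-s)} + ∑ C(j,s) c^{(s)} y^{(j+1-s)}
    --    = (∑ C(j,s) c^{(s+1)} y^{(j-s)} + ∑ C(j,s+1) c^{(s+1)} y^{(j-s)}) + C(j+1,0) c^0 y^{(j+1)}
    have e3 : ∑ s ∈ Finset.range (j+1), (j.choose s : ℂ) * cfall c s * cfall y (j + 1 - s)
        = ∑ s ∈ Finset.range (j+1), (j.choose (s+1) : ℂ) * cfall c (s+1) * cfall y (j - s)
          + ((j+1).choose 0 : ℂ) * cfall c 0 * cfall y (j + 1 - 0) := by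
      rw [Finset.sum_range_succ' (fun s => (j.choose s : ℂ) * cfall c s * cfall y (j + 1 - s)),
          Finset.sum_range_succ (fun s => (j.choose (s+1) : ℂ) * cfall c (s+1) * cfall y (j - s))]
      have hz : (j.choose (j+1) : ℂ) = 0 := by
        rw [Nat.choose_eq_zero_of_lt (by omega)]; simp
      rw [hz, zero_mul, zero_mul, add_zero]
      congr 1
      · apply Finset.sum_congr rfl
        intro s hs
        rw [Finset.mem_range] at hs
        rw [show j + 1 - (s+1) = j - s from by omega]
      · simp
    rw [e3]
    ring

lemma cfall_keyI (x c : ℂ) (j l : ℕ) :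
    cfall (x + c - l) j * cfall x l
      = ∑ s ∈ Finset.range (j+1), (j.choose s : ℂ) * cfall c s * cfall x (j + l - s) := by
  have e : ∀ s ∈ Finset.range (j+1),
      (j.choose s : ℂ) * cfall c s * cfall x (j + l - s)
        = cfall x l * ((j.choose s : ℂ) * cfall c s * cfall (x - l) (j - s)) := by
    intro s hs
    rw [Finset.mem_range] at hs
    rw [show j + l - s = l + (j - s) from by omega, cfall_add]
    ring
  rw [Finset.sum_congr rfl e, ← Finset.mul_sum, ← cfall_vandermonde,
      show x + c - (l:ℂ) = (x - l) + c from by ring]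
  ring

lemma cfall_keyII (x c : ℂ) (j l : ℕ) :
    cfall (x + c - j) l * cfall x j
      = ∑ s ∈ Finset.range (l+1), (l.choose s : ℂ) * cfall c s * cfall x (j + l - s) := by
  have e : ∀ s ∈ Finset.range (l+1),
      (l.choose s : ℂ) * cfall c s * cfall x (j + l - s)
        = cfall x j * ((l.choose s : ℂ) * cfall c s * cfall (x - j) (l - s)) := by
    intro s hs
    rw [Finset.mem_range] at hs
    rw [show j + l - s = j + (l - s) from by omega, cfall_add]
    ring
  rw [Finset.sum_congr rfl e, ← Finset.mul_sum, ← cfall_vandermonde,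
      show x + c - (j:ℂ) = (x - j) + c from by ring]
  ring

lemma VAct_single (N : ℕ) (α : ℂ) (a : ℤ) (j : ℕ) (A : Matrix (Fin N) (Fin N) ℂ)
    (k : ℤ) (v : Fin N → ℂ) :
    VAct N α a j A (Finsupp.single k v)
      = Finsupp.single (k + a - (j : ℤ)) (cfall ((k : ℂ) + α) j • A.mulVec v) := by
  rw [VAct, Finsupp.lsum_single]
  simp only [LinearMap.coe_comp, Function.comp_apply, LinearMap.smul_apply,
    Matrix.mulVecLin_apply, Finsupp.lsingle_apply]

lemma sum_single_const {N : ℕ} {ι : Type*} (K : ℤ) (S : Finset ι) (w : ι → (Fin N → ℂ)) :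
    ∑ i ∈ S, Finsupp.single K (w i) = Finsupp.single K (∑ i ∈ S, w i) :=
  (map_sum (Finsupp.lsingle K : (Fin N → ℂ) →ₗ[ℂ] LTP N) w S).symm

lemma VAct_bracket (N : ℕ) (α : ℂ) (a : ℤ) (j : ℕ) (A : Matrix (Fin N) (Fin N) ℂ)
    (b : ℤ) (l : ℕ) (B : Matrix (Fin N) (Fin N) ℂ) :
    VAct N α a j A * VAct N α b l B - VAct N α b l B * VAct N α a j A =
      (∑ s ∈ Finset.range (j + 1),
        ((j.choose s : ℂ) * (dfall b s : ℂ)) • VAct N α (a + b - (s : ℤ)) (j + l - s) (A * B))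
      - (∑ s ∈ Finset.range (l + 1),
        ((l.choose s : ℂ) * (dfall a s : ℂ)) • VAct N α (a + b - (s : ℤ)) (j + l - s) (B * A)) := by
  apply Finsupp.lhom_ext
  intro k v
  simp only [LinearMap.sub_apply, Module.End.mul_apply, LinearMap.coe_sum, Finset.sum_apply,
    LinearMap.smul_apply, VAct_single, Matrix.mulVec_smul, Finsupp.smul_single, smul_smul]
  set K : ℤ := k + a + b - (j : ℤ) - (l : ℤ) with hK
  have hsum1 : (∑ s ∈ Finset.range (j+1),
      Finsupp.single (k + (a + b - (s:ℤ)) - ((j + l - s : ℕ) : ℤ))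
        (((j.choose s : ℂ) * (dfall b s : ℂ) * cfall ((k:ℂ)+α) (j + l - s)) • (A*B).mulVec v))
      = Finsupp.single K (∑ s ∈ Finset.range (j+1),
        ((j.choose s : ℂ) * (dfall b s : ℂ) * cfall ((k:ℂ)+α) (j + l - s)) • (A*B).mulVec v) := by
    rw [← sum_single_const]
    apply Finset.sum_congr rfl
    intro s hs
    rw [Finset.mem_range] at hs
    congr 1
    omega
  have hsum2 : (∑ s ∈ Finset.range (l+1),
      Finsupp.single (k + (a + b - (s:ℤ)) - ((j + l - s : ℕ) : ℤ))
        (((l.choose s : ℂ) * (dfall a s : ℂ) * cfall ((k:ℂ)+α) (j + l - s)) • (B*A).mulVec v))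
      = Finsupp.single K (∑ s ∈ Finset.range (l+1),
        ((l.choose s : ℂ) * (dfall a s : ℂ) * cfall ((k:ℂ)+α) (j + l - s)) • (B*A).mulVec v) := by
    rw [← sum_single_const]
    apply Finset.sum_congr rfl
    intro s hs
    rw [Finset.mem_range] at hs
    congr 1
    omega
  rw [show k + b - (l:ℤ) + a - (j:ℤ) = K from by rw [hK]; ring,
      show k + a - (j:ℤ) + b - (l:ℤ) = K from by rw [hK]; ring,
      hsum1, hsum2, ← Finsupp.single_sub, ← Finsupp.single_sub]
  congr 1
  rw [Matrix.mulVec_mulVec, Matrix.mulVec_mulVec, ← Finset.sum_smul, ← Finset.sum_smul]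
  push_cast
  simp only [dfall_cast]
  rw [show ((k:ℂ) + (b:ℂ) - (l:ℂ) + α) = ((k:ℂ) + α) + (b:ℂ) - (l:ℂ) from by ring,
      show ((k:ℂ) + (a:ℂ) - (j:ℂ) + α) = ((k:ℂ) + α) + (a:ℂ) - (j:ℂ) from by ring,
      cfall_keyI ((k:ℂ) + α) (b:ℂ) j l, cfall_keyII ((k:ℂ) + α) (a:ℂ) j l]

lemma VAct_add (N : ℕ) (α : ℂ) (a : ℤ) (j : ℕ) (A B : Matrix (Fin N) (Fin N) ℂ) :
    VAct N α a j (A + B) = VAct N α a j A + VAct N α a j B := by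
  apply Finsupp.lhom_ext
  intro k v
  simp only [LinearMap.add_apply, VAct_single, Matrix.add_mulVec, smul_add,
    Finsupp.single_add]

lemma VAct_smul (N : ℕ) (α : ℂ) (a : ℤ) (j : ℕ) (c : ℂ) (A : Matrix (Fin N) (Fin N) ℂ) :
    VAct N α a j (c • A) = c • VAct N α a j A := by
  apply Finsupp.lhom_ext
  intro k v
  simp only [LinearMap.smul_apply, VAct_single, Matrix.smul_mulVec,
    Finsupp.smul_single, smul_smul, mul_comm]

lemma stdBasis_mulVec {N : ℕ} (p q : Fin N) (v : Fin N → ℂ) :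
    (Matrix.single p q (1:ℂ)).mulVec v = Pi.single p (v q) := by
  funext i
  simp [Matrix.mulVec, dotProduct, Matrix.single, Pi.single_apply, ite_and,
    eq_comm]

lemma smul_pi_single {N : ℕ} (p : Fin N) (c x : ℂ) :
    c • (Pi.single p x : Fin N → ℂ) = Pi.single p (c * x) := by
  funext i
  simp [Pi.single_apply, mul_ite]

lemma VGrade_single_mem {N : ℕ} (k : ℤ) (r : Fin N) (c : ℂ) :
    Finsupp.single k (Pi.single r c) ∈ VGrade N (k * (N:ℤ) + (r.val : ℤ)) :=
  Submodule.subset_span ⟨k, r, c, rfl, rfl⟩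

lemma VGrade_act (N : ℕ) (α : ℂ) (a : ℤ) (j : ℕ) (p q : Fin N) (d : ℤ) :
    ∀ v ∈ VGrade N d, VAct N α a j (Matrix.single p q 1) v
      ∈ VGrade N (d + gdeg N a j p q) := by
  intro v hv
  have hle : VGrade N d ≤
      (VGrade N (d + gdeg N a j p q)).comap (VAct N α a j (Matrix.single p q 1)) := by
    rw [VGrade, Submodule.span_le]
    rintro x ⟨k, r, c, hd, rfl⟩
    simp only [SetLike.mem_coe, Submodule.mem_comap, VAct_single, stdBasis_mulVec]
    by_cases hqr : q = r
    · subst hqr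
      rw [Pi.single_eq_same, smul_pi_single]
      have hdeg : d + gdeg N a j p q = (k + a - (j:ℤ)) * (N:ℤ) + (p.val : ℤ) := by
        subst hd; rw [gdeg]; ring
      rw [hdeg]
      exact VGrade_single_mem _ _ _
    · rw [Pi.single_eq_of_ne hqr,
        show (Pi.single p (0:ℂ) : Fin N → ℂ) = 0 from by simp, smul_zero, Finsupp.single_zero]
      exact zero_mem _
  exact hle hv

def bidx {N : ℕ} (hN : 1 ≤ N) (d : ℤ) : Fin N :=
  ⟨(d % (N:ℤ)).toNat, by
    have h0 : (0:ℤ) < (N:ℤ) := by exact_mod_cast hN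
    have h1 := Int.emod_nonneg d (by omega : (N:ℤ) ≠ 0)
    have h2 := Int.emod_lt_of_pos d h0
    omega⟩

def bvec (N : ℕ) (hN : 1 ≤ N) (d : ℤ) : LTP N :=
  Finsupp.single (d / (N:ℤ)) (Pi.single (bidx hN d) 1)

lemma bvec_ne_zero (N : ℕ) (hN : 1 ≤ N) (d : ℤ) : bvec N hN d ≠ 0 := by
  intro h
  rw [bvec, Finsupp.single_eq_zero] at h
  have := congrFun h (bidx hN d)
  rw [Pi.single_eq_same] at this
  exact one_ne_zero this

lemma kr_unique {N : ℕ} (hN : 1 ≤ N) {d k : ℤ} {r : Fin N} (hd : d = k * (N:ℤ) + (r.val : ℤ)) :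
    d / (N:ℤ) = k ∧ d % (N:ℤ) = (r.val : ℤ) := by
  have h0 : (0:ℤ) < (N:ℤ) := by exact_mod_cast hN
  have hr0 : (0:ℤ) ≤ (r.val : ℤ) := Int.natCast_nonneg _
  have hrN : ((r.val:ℤ)) < (N:ℤ) := by exact_mod_cast r.isLt
  constructor
  · rw [hd, add_comm, Int.add_mul_ediv_right _ _ (by omega : (N:ℤ) ≠ 0),
      Int.ediv_eq_zero_of_lt hr0 hrN, zero_add]
  · rw [hd, add_comm, Int.add_mul_emod_self_right, Int.emod_eq_of_lt hr0 hrN]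

lemma VGrade_eq_span (N : ℕ) (hN : 1 ≤ N) (d : ℤ) :
    VGrade N d = Submodule.span ℂ {bvec N hN d} := by
  apply le_antisymm
  · rw [VGrade, Submodule.span_le]
    rintro x ⟨k, r, c, hd, rfl⟩
    have h := kr_unique hN hd
    have hk : d / (N:ℤ) = k := h.1
    have h2 := h.2
    have hr : bidx hN d = r := by
      apply Fin.ext
      simp only [bidx]
      omega
    rw [SetLike.mem_coe, Submodule.mem_span_singleton]
    exact ⟨c, by rw [bvec, hk, hr, Finsupp.smul_single, smul_pi_single, mul_one]⟩
  · rw [Submodule.span_le, Set.singleton_subset_iff]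
    have h0 : (0:ℤ) < (N:ℤ) := by exact_mod_cast hN
    have m1 := Int.emod_nonneg d (by omega : (N:ℤ) ≠ 0)
    have e := Int.mul_ediv_add_emod d (N:ℤ)
    have hd : d = (d / (N:ℤ)) * (N:ℤ) + (((bidx hN d).val : ℤ)) := by
      simp only [bidx]
      rw [Int.toNat_of_nonneg m1]
      linear_combination -e
    have hm := VGrade_single_mem (d / (N:ℤ)) (bidx hN d) (1:ℂ)
    rw [← hd] at hm
    exact hm

lemma bvec_inj_aux {N : ℕ} (hN : 1 ≤ N) {d d' : ℤ} (h1 : d / (N:ℤ) = d' / (N:ℤ))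
    (h2 : bidx hN d = bidx hN d') : d = d' := by
  have h0 : (0:ℤ) < (N:ℤ) := by exact_mod_cast hN
  have m1 := Int.emod_nonneg d (by omega : (N:ℤ) ≠ 0)
  have m2 := Int.emod_nonneg d' (by omega : (N:ℤ) ≠ 0)
  have e1 := Int.mul_ediv_add_emod d (N:ℤ)
  have e2 := Int.mul_ediv_add_emod d' (N:ℤ)
  have h3 : (d % (N:ℤ)).toNat = (d' % (N:ℤ)).toNat := congrArg Fin.val h2
  have h4 : d % (N:ℤ) = d' % (N:ℤ) := by omega
  rw [← e1, ← e2, h1, h4]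

lemma bvec_li (N : ℕ) (hN : 1 ≤ N) : LinearIndependent ℂ (bvec N hN) := by
  rw [linearIndependent_iff']
  intro S g hg d hd
  have happ : (∑ d' ∈ S, g d' • bvec N hN d') (d / (N:ℤ)) (bidx hN d) = 0 := by
    rw [hg]; rfl
  rw [Finsupp.finset_sum_apply, Finset.sum_apply] at happ
  rw [Finset.sum_eq_single_of_mem d hd] at happ
  · rw [Finsupp.smul_apply, Pi.smul_apply, smul_eq_mul, bvec, Finsupp.single_eq_same,
      Pi.single_eq_same, mul_one] at happ
    exact happ
  · intro d' hd' hne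
    simp only [bvec, Finsupp.smul_apply, Pi.smul_apply, smul_eq_mul]
    rw [Finsupp.single_apply]
    by_cases hk : d' / (N:ℤ) = d / (N:ℤ)
    · rw [if_pos hk]
      have hb : bidx hN d ≠ bidx hN d' := fun h => hne (bvec_inj_aux hN hk.symm h).symm
      rw [Pi.single_eq_of_ne hb]
      simp
    · rw [if_neg hk]
      simp

lemma VGrade_iSupIndep (N : ℕ) (hN : 1 ≤ N) : iSupIndep (VGrade N) := by
  have h : VGrade N = fun d => Submodule.span ℂ {bvec N hN d} := funext (VGrade_eq_span N hN)
  rw [h]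
  exact (bvec_li N hN).iSupIndep_span_singleton

lemma mem_top_of_singles {N : ℕ} (U : Submodule ℂ (LTP N))
    (h : ∀ (k : ℤ) (r : Fin N) (c : ℂ), Finsupp.single k (Pi.single r c) ∈ U)
    (x : LTP N) : x ∈ U := by
  induction x using Finsupp.induction_linear with
  | zero => exact zero_mem _
  | add f g hf hg => exact add_mem hf hg
  | single k v =>
    have hv : Finsupp.single k v = ∑ r : Fin N, Finsupp.single k (Pi.single r (v r)) := by
      rw [sum_single_const, Finset.univ_sum_single]
    rw [hv]
    exact Submodule.sum_mem _ fun r _ => h k r (v r)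

lemma VGrade_iSup (N : ℕ) : iSup (VGrade N) = ⊤ := by
  rw [eq_top_iff]
  rintro x -
  refine mem_top_of_singles _ (fun k r c => ?_) x
  exact Submodule.mem_iSup_of_mem (k * (N:ℤ) + (r.val : ℤ)) (VGrade_single_mem k r c)

lemma VGrade_rank (N : ℕ) (hN : 1 ≤ N) (d : ℤ) : Module.rank ℂ (VGrade N d) = 1 := by
  rw [VGrade_eq_span N hN d, rank_span_set (s := {bvec N hN d}) (by rw [linearIndepOn_singleton_iff]; exact bvec_ne_zero N hN d),
    Cardinal.mk_singleton]

lemma VAct11_apply (N : ℕ) (α : ℂ) (w : LTP N) (m : ℤ) :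
    (VAct N α 1 1 (1 : Matrix (Fin N) (Fin N) ℂ) w) m = ((m:ℂ) + α) • w m := by
  induction w using Finsupp.induction_linear with
  | zero => simp
  | add f g hf hg => rw [map_add, Finsupp.add_apply, hf, hg, Finsupp.add_apply, smul_add]
  | single k v =>
    rw [VAct_single, Matrix.one_mulVec, cfall_one]
    have e : k + 1 - ((1:ℕ):ℤ) = k := by omega
    rw [e]
    rw [Finsupp.single_apply, Finsupp.single_apply]
    by_cases h : k = m
    · subst h; simp
    · rw [if_neg h, if_neg h, smul_zero]

lemma eigen_extract (N : ℕ) (α : ℂ) (U : Submodule ℂ (LTP N))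
    (hU : ∀ (a : ℤ) (j : ℕ) (A : Matrix (Fin N) (Fin N) ℂ), ∀ v ∈ U, VAct N α a j A v ∈ U) :
    ∀ S : Finset ℤ, ∀ w : LTP N, w ∈ U → w.support ⊆ S →
      ∀ k : ℤ, Finsupp.single k (w k) ∈ U := by
  intro S
  induction S using Finset.induction with
  | empty =>
    intro w hw hsupp k
    have : w = 0 := by
      ext m i
      by_contra h
      have : m ∈ w.support := Finsupp.mem_support_iff.mpr (fun h0 => h (by rw [h0]; rfl))
      exact absurd (hsupp this) (Finset.notMem_empty m)
    rw [this]
    simp only [Finsupp.coe_zero, Pi.zero_apply, Finsupp.single_zero]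
    exact zero_mem _
  | @insert k0 S' hk0 ih =>
    intro w hw hsupp k
    set w' := VAct N α 1 1 1 w - ((k0:ℂ) + α) • w with hw'def
    have hw'U : w' ∈ U := sub_mem (hU _ _ _ _ hw) (Submodule.smul_mem _ _ hw)
    have hw'app : ∀ m : ℤ, w' m = ((m:ℂ) - (k0:ℂ)) • w m := by
      intro m
      rw [hw'def, Finsupp.sub_apply, Finsupp.smul_apply, VAct11_apply]
      rw [← sub_smul]
      ring_nf
    have hw'supp : w'.support ⊆ S' := by
      intro m hm
      rw [Finsupp.mem_support_iff] at hm
      have hm0 : w m ≠ 0 := fun h => hm (by rw [hw'app, h, smul_zero])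
      have hmk0 : m ≠ k0 := by
        intro h
        apply hm
        rw [hw'app, h, sub_self, zero_smul]
      have := hsupp (Finsupp.mem_support_iff.mpr hm0)
      rw [Finset.mem_insert] at this
      tauto
    have step : ∀ m : ℤ, m ≠ k0 → Finsupp.single m (w m) ∈ U := by
      intro m hm
      have hne : ((m:ℂ) - (k0:ℂ)) ≠ 0 := by
        rw [sub_ne_zero]
        exact_mod_cast hm
      have : Finsupp.single m (w m) = ((m:ℂ) - (k0:ℂ))⁻¹ • Finsupp.single m (w' m) := by
        rw [hw'app, Finsupp.smul_single, smul_smul, inv_mul_cancel₀ hne, one_smul]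
      rw [this]
      exact Submodule.smul_mem _ _ (ih w' hw'U hw'supp m)
    by_cases hk : k = k0
    · subst hk
      have hrepr : ∑ m ∈ insert k S', Finsupp.single m (w m) = w := by
        rw [← Finset.sum_subset hsupp (fun m _ hm => by
          rw [Finsupp.notMem_support_iff.mp hm, Finsupp.single_zero])]
        exact Finsupp.sum_single w
      rw [Finset.sum_insert hk0] at hrepr
      rw [eq_sub_of_add_eq hrepr]
      refine sub_mem hw (Submodule.sum_mem _ fun m hm => step m ?_)
      intro h; exact hk0 (h ▸ hm)
    · exact step k hk

lemma Valpha_irred (N : ℕ) (hN : 1 ≤ N) (α : ℂ) (U : Submodule ℂ (LTP N))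
    (hU : ∀ (a : ℤ) (j : ℕ) (A : Matrix (Fin N) (Fin N) ℂ), ∀ v ∈ U, VAct N α a j A v ∈ U) :
    U = ⊥ ∨ U = ⊤ := by
  by_cases hbot : U = ⊥
  · left; exact hbot
  right
  obtain ⟨u, huU, hu0⟩ : ∃ u ∈ U, u ≠ (0 : LTP N) := by
    by_contra h
    push_neg at h
    exact hbot (by rw [Submodule.eq_bot_iff]; exact h)
  obtain ⟨k, hk⟩ := Finsupp.ne_iff.mp hu0
  rw [Finsupp.coe_zero, Pi.zero_apply] at hk
  obtain ⟨r, hr⟩ : ∃ r : Fin N, u k r ≠ 0 := by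
    by_contra h
    push_neg at h
    exact hk (funext h)
  have hsingle : Finsupp.single k (u k) ∈ U :=
    eigen_extract N α U hU u.support u huU (Finset.Subset.refl _) k
  have hall : ∀ (m : ℤ) (p : Fin N) (c : ℂ), Finsupp.single m (Pi.single p c) ∈ U := by
    intro m p c
    have h2 := hU (m - k) 0 (Matrix.single p r 1) _ hsingle
    rw [VAct_single, stdBasis_mulVec, cfall_zero, one_smul,
      show k + (m - k) - ((0:ℕ):ℤ) = m from by push_cast; ring] at h2
    have h3 := Submodule.smul_mem U (c / (u k r)) h2
    rw [Finsupp.smul_single, smul_pi_single, div_mul_cancel₀ c hr] at h3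
    exact h3
  rw [eq_top_iff]
  rintro x -
  exact mem_top_of_singles U hall x

/-- For every `α ∈ ℂ`, `V(α) = ℂ^N[t,t⁻¹]t^α` is an irreducible `𝒟̂^N`-module of the
intermediate series: it is a `𝒟̂^N`-module (with `C` acting as `0`) graded by the
one-dimensional components `V(α)_d`, and it has no invariant subspace besides `⊥` and `⊤`. -/
theorem Valpha_irreducible_intermediate (N : ℕ) (hN : 1 ≤ N) (α : ℂ) :
    (∃ M : GradedDhatModule N (LTP N),
        M.ρ = VAct N α ∧ M.cC = 0 ∧ M.grade = VGrade N) ∧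
    (∀ d : ℤ, Module.rank ℂ (VGrade N d) = 1) ∧
    ((⊥ : Submodule ℂ (LTP N)) ≠ ⊤ ∧
      ∀ U : Submodule ℂ (LTP N),
        (∀ (a : ℤ) (j : ℕ) (A : Matrix (Fin N) (Fin N) ℂ), ∀ v ∈ U, VAct N α a j A v ∈ U) →
        U = ⊥ ∨ U = ⊤) := by
  refine ⟨⟨⟨⟨VAct N α, 0, VAct_add N α, VAct_smul N α,
      fun a j A => by rw [zero_mul, mul_zero],
      fun a j A b l B => by
        rw [smul_zero, add_zero]
        exact VAct_bracket N α a j A b l B⟩,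
      VGrade N,
      DirectSum.isInternal_submodule_of_iSupIndep_of_iSup_eq_top
        (VGrade_iSupIndep N hN) (VGrade_iSup N),
      fun a j p q d => VGrade_act N α a j p q d,
      fun d v _ => by
        rw [LinearMap.zero_apply]
        exact zero_mem _⟩, rfl, rfl, rfl⟩,
    VGrade_rank N hN, ?_, fun U hU => Valpha_irred N hN α U hU⟩
  intro h
  have hx : bvec N hN 0 ∈ (⊥ : Submodule ℂ (LTP N)) := by
    rw [h]; exact Submodule.mem_top
  exact bvec_ne_zero N hN 0 ((Submodule.mem_bot ℂ).mp hx)
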